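/- Let Ψ be a root system in a finite-dimensional real inner product space and let Σ ⊆ Ψ be a nonempty saturated special closed subset, i.e. Σ = Ψ ∩ C for some convex cone C with C ∩ (−C) = {0}. Then: (1) Σ contains an extreme root, i.e. a root α ∈ Σ such that (1/2)α ∉ Σ and ℝ_{≥0}α is an extreme ray of the convex cone generated by Σ; (2) for any extreme root α ∈ Σ, the set Σ ∖ ℝα is again a saturated special closed subset of Ψ; and (3) if the linear span of Σ has dimension at least 2, then for every given element σ ∈ Σ there exists an extreme root α ∈ Σ linearly independent from σ. -/

import Mathlib

open scoped RealInnerProductSpace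

/-- A (crystallographic, not necessarily reduced or irreducible) root system
in a real inner product space: a finite set of nonzero vectors spanning the
space, closed under the associated reflections, with integral Cartan numbers. -/
structure IsRootSystem {V : Type*} [NormedAddCommGroup V] [InnerProductSpace ℝ V]
    (Φ : Set V) : Prop where
  finite : Φ.Finite
  ne_zero : ∀ α ∈ Φ, α ≠ 0
  span_eq_top : Submodule.span ℝ Φ = ⊤
  reflect_mem : ∀ α ∈ Φ, ∀ β ∈ Φ, β - (2 * ⟪β, α⟫ / ⟪α, α⟫) • α ∈ Φ
  crystallographic : ∀ α ∈ Φ, ∀ β ∈ Φ, ∃ n : ℤ, 2 * ⟪β, α⟫ / ⟪α, α⟫ = (n : ℝ)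

/-- The convex cone generated by a set: all finite nonnegative combinations. -/
def coneGen {V : Type*} [AddCommGroup V] [Module ℝ V] (S : Set V) : Set V :=
  {x | ∃ (n : ℕ) (c : Fin n → ℝ) (v : Fin n → V),
    (∀ i, 0 ≤ c i) ∧ (∀ i, v i ∈ S) ∧ x = ∑ i, c i • v i}

/-- `ℝ≥0 • α` is an extreme ray of the convex cone `D`: the ray is contained in
`D` and whenever `α = x + y` with `x, y ∈ D`, both `x` and `y` lie on the
ray. -/
def IsExtremeRayOf {V : Type*} [AddCommGroup V] [Module ℝ V]
    (D : Set V) (α : V) : Prop :=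
  (∀ t : ℝ, 0 ≤ t → t • α ∈ D) ∧
    ∀ x ∈ D, ∀ y ∈ D, x + y = α →
      (∃ t : ℝ, 0 ≤ t ∧ x = t • α) ∧ (∃ t : ℝ, 0 ≤ t ∧ y = t • α)

/-- An extreme root of `S`: a root `α ∈ S` with `(1/2)α ∉ S` such that
`ℝ≥0 • α` is an extreme ray of the convex cone generated by `S`. -/
def IsExtremeRoot {V : Type*} [AddCommGroup V] [Module ℝ V]
    (S : Set V) (α : V) : Prop :=
  α ∈ S ∧ (2⁻¹ : ℝ) • α ∉ S ∧ IsExtremeRayOf (coneGen S) α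

section Helpers

variable {V : Type*} [AddCommGroup V] [Module ℝ V]

local notation "R0" => {c : ℝ // 0 ≤ c}

lemma coneGen_eq_span (S : Set V) :
    coneGen S = (Submodule.span R0 S : Set V) := by
  ext x
  constructor
  · rintro ⟨n, c, v, hc, hv, rfl⟩
    exact Submodule.sum_mem _ fun i _ =>
      Submodule.smul_mem _ (⟨c i, hc i⟩ : R0) (Submodule.subset_span (hv i))
  · intro hx
    induction hx using Submodule.span_induction with
    | mem x hxS => exact ⟨1, fun _ => 1, fun _ => x, fun _ => zero_le_one, fun _ => hxS, by simp⟩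
    | zero => exact ⟨0, fun i => 0, fun i => 0, fun i => le_rfl, fun i => i.elim0, by simp⟩
    | add x y hx hy ihx ihy =>
      obtain ⟨n, c, v, hc, hv, rfl⟩ := ihx
      obtain ⟨m, d, w, hd, hw, rfl⟩ := ihy
      refine ⟨n + m, Fin.append c d, Fin.append v w, ?_, ?_, ?_⟩
      · intro i
        rcases Nat.lt_or_ge i.val n with h | h
        · have : i = Fin.castAdd m ⟨i.val, h⟩ := by simp [Fin.ext_iff]
          rw [this, Fin.append_left]; exact hc _
        · have : i = Fin.natAdd n ⟨i.val - n, by omega⟩ := by simp [Fin.ext_iff]; omega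
          rw [this, Fin.append_right]; exact hd _
      · intro i
        rcases Nat.lt_or_ge i.val n with h | h
        · have : i = Fin.castAdd m ⟨i.val, h⟩ := by simp [Fin.ext_iff]
          rw [this, Fin.append_left]; exact hv _
        · have : i = Fin.natAdd n ⟨i.val - n, by omega⟩ := by simp [Fin.ext_iff]; omega
          rw [this, Fin.append_right]; exact hw _
      · rw [Fin.sum_univ_add]
        simp [Fin.append_left, Fin.append_right]
    | smul a x hx ihx =>
      obtain ⟨n, c, v, hc, hv, rfl⟩ := ihx
      refine ⟨n, fun i => a.1 * c i, v, fun i => mul_nonneg a.2 (hc i), hv, ?_⟩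
      rw [← Nonneg.coe_smul, Finset.smul_sum]
      simp [smul_smul]

/-- The pointed cone `C ∪ {0}` as an `R0`-submodule. -/
def coneSubmodule (C : ConvexCone ℝ V) : Submodule R0 V where
  carrier := insert 0 ↑C
  zero_mem' := Set.mem_insert 0 _
  add_mem' := by
    rintro a b (rfl | ha) hb
    · simpa using hb
    · rcases hb with rfl | hb
      · simpa using Set.mem_insert_of_mem _ ha
      · exact Set.mem_insert_of_mem _ (C.add_mem ha hb)
  smul_mem' := by
    rintro ⟨c, hc⟩ x (rfl | hx)
    · simp
    · rcases hc.eq_or_lt with rfl | hc'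
      · simp
      · exact Set.mem_insert_of_mem _ (C.smul_mem hc' hx)

lemma mem_C_of_mem_span {C : ConvexCone ℝ V} {S : Set V} (hSC : S ⊆ ↑C) {x : V}
    (hx : x ∈ Submodule.span R0 S) : x = 0 ∨ x ∈ C := by
  have : Submodule.span R0 S ≤ coneSubmodule C := by
    rw [Submodule.span_le]
    exact fun y hy => Set.mem_insert_of_mem _ (hSC hy)
  rcases this hx with h | h
  · exact Or.inl h
  · exact Or.inr h

lemma span_salient {C : ConvexCone ℝ V} (hC : ∀ x ∈ C, -x ∈ C → x = 0) {S : Set V}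
    (hSC : S ⊆ ↑C) : ∀ x ∈ Submodule.span R0 S, -x ∈ Submodule.span R0 S → x = 0 := by
  intro x hx hnx
  rcases mem_C_of_mem_span hSC hx with rfl | hx'
  · rfl
  rcases mem_C_of_mem_span hSC hnx with h0 | hnx'
  · simpa [neg_eq_zero] using h0
  · exact hC x hx' hnx'

lemma exists_minimal_gen (S : Finset V) :
    ∃ T : Finset V, T ⊆ S ∧
      Submodule.span R0 (T : Set V) = Submodule.span R0 (S : Set V) ∧
      ∀ β ∈ T, β ∉ Submodule.span R0 ((T : Set V) \ {β}) := by
  classical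
  induction S using Finset.strongInductionOn with
  | _ S ih =>
    by_cases h : ∃ β ∈ S, β ∈ Submodule.span R0 ((S : Set V) \ {β})
    · obtain ⟨β, hβS, hβ⟩ := h
      obtain ⟨T, hTS, hspan, hmin⟩ := ih (S.erase β) (Finset.erase_ssubset hβS)
      refine ⟨T, hTS.trans (Finset.erase_subset _ _), ?_, hmin⟩
      rw [hspan]
      refine le_antisymm (Submodule.span_mono (by rw [Finset.coe_erase]; exact Set.diff_subset)) ?_
      rw [Submodule.span_le]
      intro γ hγ
      rcases eq_or_ne γ β with rfl | hne
      · rw [Finset.coe_erase]; exact hβ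
      · exact Submodule.subset_span (by rw [Finset.coe_erase]; exact ⟨hγ, hne⟩)
    · exact ⟨S, le_refl _, rfl, fun β hβ hmem => h ⟨β, hβ, hmem⟩⟩

lemma minimal_is_extreme {S : Set V}
    (hpt : ∀ x ∈ Submodule.span R0 S, -x ∈ Submodule.span R0 S → x = 0)
    {β : V} (hβS : β ∈ S) (hβ0 : β ≠ 0)
    (hmin : β ∉ Submodule.span R0 (S \ {β})) :
    ∀ x ∈ Submodule.span R0 S, ∀ y ∈ Submodule.span R0 S, x + y = β →
      (∃ t : ℝ, 0 ≤ t ∧ x = t • β) ∧ (∃ t : ℝ, 0 ≤ t ∧ y = t • β) := by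
  intro x hx y hy hxy
  have hins : S = insert β (S \ {β}) := by
    rw [Set.insert_diff_singleton, Set.insert_eq_self.2 hβS]
  rw [hins, Submodule.mem_span_insert] at hx hy
  obtain ⟨a, w₁, hw₁, rfl⟩ := hx
  obtain ⟨b, w₂, hw₂, rfl⟩ := hy
  have hxy' : ((a : ℝ) • β + w₁) + ((b : ℝ) • β + w₂) = β := by
    rw [Nonneg.coe_smul, Nonneg.coe_smul]; exact hxy
  have key : ((1 : ℝ) - ((a : ℝ) + (b : ℝ))) • β = w₁ + w₂ := by
    rw [sub_smul, add_smul, one_smul, sub_eq_iff_eq_add]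
    conv_lhs => rw [← hxy']
    abel
  have hsub : Submodule.span R0 (S \ {β}) ≤ Submodule.span R0 S :=
    Submodule.span_mono Set.diff_subset
  have hw12 : w₁ + w₂ ∈ Submodule.span R0 (S \ {β}) := Submodule.add_mem _ hw₁ hw₂
  rcases lt_or_ge ((a : ℝ) + (b : ℝ)) 1 with hlt | hge
  · exfalso
    apply hmin
    have h1 : (0 : ℝ) < 1 - ((a : ℝ) + (b : ℝ)) := by linarith
    have hβeq : β = (⟨(1 - ((a : ℝ) + (b : ℝ)))⁻¹, by positivity⟩ : R0) • (w₁ + w₂) := by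
      rw [Nonneg.mk_smul, ← key, smul_smul, inv_mul_cancel₀ h1.ne', one_smul]
    have hmem := Submodule.smul_mem (Submodule.span R0 (S \ {β}))
      (⟨(1 - ((a : ℝ) + (b : ℝ)))⁻¹, by positivity⟩ : R0) hw12
    rwa [← hβeq] at hmem
  · have hnw : -(w₁ + w₂) ∈ Submodule.span R0 S := by
      have : -(w₁ + w₂) = (⟨(a : ℝ) + (b : ℝ) - 1, by linarith⟩ : R0) • β := by
        rw [Nonneg.mk_smul, ← key, ← neg_smul, neg_sub]
      rw [this]
      exact Submodule.smul_mem _ _ (Submodule.subset_span hβS)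
    have h12 : w₁ + w₂ = 0 := hpt _ (hsub hw12) hnw
    have hw₂' : w₂ = -w₁ := by linear_combination (norm := abel) h12
    have h1 : w₁ = 0 := by
      refine hpt _ (hsub hw₁) ?_
      rw [← hw₂']; exact hsub hw₂
    have h2 : w₂ = 0 := by rw [hw₂', h1, neg_zero]
    subst h1; subst h2
    exact ⟨⟨a, a.2, by rw [add_zero, Nonneg.coe_smul]⟩, ⟨b, b.2, by rw [add_zero, Nonneg.coe_smul]⟩⟩

end Helpers

section Helpers2

variable {V : Type*} [AddCommGroup V] [Module ℝ V]

local notation "R0" => {c : ℝ // 0 ≤ c}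

lemma extreme_root_of_gen {S : Set V} (hfin : S.Finite) (h0 : ∀ x ∈ S, x ≠ 0)
    {β : V} (hβS : β ∈ S)
    (hext : ∀ x ∈ Submodule.span R0 S, ∀ y ∈ Submodule.span R0 S, x + y = β →
      (∃ t : ℝ, 0 ≤ t ∧ x = t • β) ∧ (∃ t : ℝ, 0 ≤ t ∧ y = t • β)) :
    ∃ t₀ : ℝ, 0 < t₀ ∧ IsExtremeRoot S (t₀ • β) := by
  have hβ0 : β ≠ 0 := h0 β hβS
  set M : Set ℝ := {t : ℝ | 0 < t ∧ t • β ∈ S} with hM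
  have hMfin : M.Finite := by
    have hinj : Function.Injective (fun t : ℝ => t • β) := smul_left_injective ℝ hβ0
    exact Set.Finite.subset (hfin.preimage hinj.injOn) (fun t ht => ht.2)
  have hMne : M.Nonempty := ⟨1, one_pos, by rwa [one_smul]⟩
  obtain ⟨t₀, ht₀M, hminM⟩ := Set.exists_min_image M id hMfin hMne
  have ht₀pos : 0 < t₀ := ht₀M.1
  refine ⟨t₀, ht₀pos, ht₀M.2, ?_, ?_, ?_⟩
  · intro hmem
    rw [smul_smul] at hmem
    have : 2⁻¹ * t₀ ∈ M := ⟨by positivity, hmem⟩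
    have := hminM _ this
    simp only [id] at this
    linarith
  · intro t ht
    rw [coneGen_eq_span, smul_smul]
    exact Submodule.smul_mem _ (⟨t * t₀, by positivity⟩ : {c : ℝ // 0 ≤ c}) (Submodule.subset_span hβS)
  · intro x hx y hy hxy
    rw [coneGen_eq_span] at hx hy
    have hx' : (t₀⁻¹ : ℝ) • x ∈ Submodule.span R0 S :=
      Submodule.smul_mem _ ⟨t₀⁻¹, by positivity⟩ hx
    have hy' : (t₀⁻¹ : ℝ) • y ∈ Submodule.span R0 S :=
      Submodule.smul_mem _ ⟨t₀⁻¹, by positivity⟩ hy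
    have hsum : (t₀⁻¹ : ℝ) • x + (t₀⁻¹ : ℝ) • y = β := by
      rw [← smul_add, hxy, smul_smul, inv_mul_cancel₀ ht₀pos.ne', one_smul]
    obtain ⟨⟨s, hs, hxs⟩, ⟨u, hu, hyu⟩⟩ := hext _ hx' _ hy' hsum
    constructor
    · refine ⟨s, hs, ?_⟩
      have : x = t₀ • (t₀⁻¹ • x) := by rw [smul_inv_smul₀ ht₀pos.ne']
      rw [this, hxs, smul_smul, mul_comm, ← smul_smul]
    · refine ⟨u, hu, ?_⟩
      have : y = t₀ • (t₀⁻¹ • y) := by rw [smul_inv_smul₀ ht₀pos.ne']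
      rw [this, hyu, smul_smul, mul_comm, ← smul_smul]

/-- Elements of the span of `S` avoiding the line `ℝα`, for `α` an extreme ray. -/
def avoidRay {S : Set V} {α : V} (hα0 : α ≠ 0) (hαspan : α ∈ Submodule.span R0 S)
    (hpt : ∀ x ∈ Submodule.span R0 S, -x ∈ Submodule.span R0 S → x = 0)
    (hray : ∀ x ∈ Submodule.span R0 S, ∀ y ∈ Submodule.span R0 S, x + y = α →
      (∃ t : ℝ, 0 ≤ t ∧ x = t • α) ∧ (∃ t : ℝ, 0 ≤ t ∧ y = t • α)) :
    Submodule R0 V where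
  carrier := {x | x ∈ Submodule.span R0 S ∧ ∀ c : ℝ, x ≠ c • α} ∪ {0}
  zero_mem' := Or.inr rfl
  add_mem' := by
    rintro x y (⟨hx, hxα⟩ | rfl) hy
    · rcases hy with ⟨hy, hyα⟩ | rfl
      · left
        refine ⟨Submodule.add_mem _ hx hy, ?_⟩
        intro c hc
        rcases lt_trichotomy c 0 with hneg | rfl | hpos
        · have h1 : -(x + y) ∈ Submodule.span R0 S := by
            rw [hc, ← neg_smul]
            exact Submodule.smul_mem _ ⟨-c, by linarith⟩ hαspan
          have h2 : x + y = 0 := hpt _ (Submodule.add_mem _ hx hy) h1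
          rw [h2] at hc
          have : c = 0 := by
            rcases smul_eq_zero.1 hc.symm with h | h
            · exact h
            · exact absurd h hα0
          linarith
        · rw [zero_smul] at hc
          have hyx : y = -x := by linear_combination (norm := abel) hc
          have : x = 0 := hpt _ hx (by rw [← hyx]; exact hy)
          exact hxα 0 (by rw [this, zero_smul])
        · have h1 : (c⁻¹ : ℝ) • x ∈ Submodule.span R0 S :=
            Submodule.smul_mem _ ⟨c⁻¹, by positivity⟩ hx
          have h2 : (c⁻¹ : ℝ) • y ∈ Submodule.span R0 S :=
            Submodule.smul_mem _ ⟨c⁻¹, by positivity⟩ hy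
          have hsum : (c⁻¹ : ℝ) • x + (c⁻¹ : ℝ) • y = α := by
            rw [← smul_add, hc, smul_smul, inv_mul_cancel₀ hpos.ne', one_smul]
          obtain ⟨⟨s, _, hxs⟩, _⟩ := hray _ h1 _ h2 hsum
          apply hxα (c * s)
          have : x = c • (c⁻¹ • x) := by rw [smul_inv_smul₀ hpos.ne']
          rw [this, hxs, smul_smul]
      · rw [add_zero]; exact Or.inl ⟨hx, hxα⟩
    · simpa using hy
  smul_mem' := by
    rintro ⟨c, hc⟩ x (⟨hx, hxα⟩ | rfl)
    · rcases hc.eq_or_lt with rfl | hcpos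
      · right; simp
      · left
        refine ⟨Submodule.smul_mem _ _ hx, ?_⟩
        intro d hd
        apply hxα (c⁻¹ * d)
        rw [Nonneg.mk_smul] at hd
        have : x = c⁻¹ • (c • x) := by rw [inv_smul_smul₀ hcpos.ne']
        rw [this, hd, smul_smul]
    · right; simp

lemma extreme_not_mem_span_diff {S : Set V} {α : V} (hα0 : α ≠ 0)
    (hpt : ∀ x ∈ Submodule.span R0 S, -x ∈ Submodule.span R0 S → x = 0)
    (hray : IsExtremeRayOf (coneGen S) α) :
    α ∉ Submodule.span R0 (S \ {x | ∃ t : ℝ, x = t • α}) := by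
  have hαspan : α ∈ Submodule.span R0 S := by
    have := hray.1 1 zero_le_one
    rwa [one_smul, coneGen_eq_span] at this
  have hray2 : ∀ x ∈ Submodule.span R0 S, ∀ y ∈ Submodule.span R0 S, x + y = α →
      (∃ t : ℝ, 0 ≤ t ∧ x = t • α) ∧ (∃ t : ℝ, 0 ≤ t ∧ y = t • α) := by
    intro x hx y hy hxy
    exact hray.2 x (by rwa [coneGen_eq_span]) y (by rwa [coneGen_eq_span]) hxy
  intro hmem
  have hle : Submodule.span R0 (S \ {x | ∃ t : ℝ, x = t • α}) ≤ avoidRay hα0 hαspan hpt hray2 := by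
    rw [Submodule.span_le]
    rintro v ⟨hvS, hvray⟩
    left
    exact ⟨Submodule.subset_span hvS, fun c hc => hvray ⟨c, hc⟩⟩
  rcases hle hmem with ⟨_, hαα⟩ | h0
  · exact hαα 1 (one_smul ℝ α).symm
  · exact hα0 h0

end Helpers2

section Helpers3

variable {V : Type*} [AddCommGroup V] [Module ℝ V]

local notation "R0" => {c : ℝ // 0 ≤ c}

/-- The line `ℝσ` as an `R0`-submodule. -/
def lineCone (σ : V) : Submodule R0 V where
  carrier := {x | ∃ t : ℝ, x = t • σ}
  zero_mem' := ⟨0, (zero_smul ℝ σ).symm⟩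
  add_mem' := by rintro x y ⟨s, rfl⟩ ⟨t, rfl⟩; exact ⟨s + t, (add_smul s t σ).symm⟩
  smul_mem' := by
    rintro ⟨c, hc⟩ x ⟨t, rfl⟩
    exact ⟨c * t, by rw [Nonneg.mk_smul, smul_smul]⟩

end Helpers3


/-- Properties of nonempty saturated special closed subsets `S = Ψ ∩ C` of a
root system `Ψ`, where `C` is a convex cone containing no opposite nonzero
vectors: (1) `S` contains an extreme root; (2) removing the line `ℝα` of an
extreme root `α` from `S` again yields a saturated special closed subset; and
(3) if the span of `S` has dimension `≥ 2`, then for every `σ ∈ S` there is an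
extreme root of `S` linearly independent from `σ`. -/
theorem saturated_special_closed_extreme_roots
    {V : Type*} [NormedAddCommGroup V] [InnerProductSpace ℝ V] [FiniteDimensional ℝ V]
    {Ψ : Set V} (hΨ : IsRootSystem Ψ)
    (C : ConvexCone ℝ V) (hC : ∀ x ∈ C, -x ∈ C → x = 0)
    (S : Set V) (hS : S = Ψ ∩ ↑C) (hne : S.Nonempty) :
    (∃ α, IsExtremeRoot S α) ∧
    (∀ α, IsExtremeRoot S α →
      ∃ C' : ConvexCone ℝ V, (∀ x ∈ C', -x ∈ C' → x = 0) ∧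
        S \ {x | ∃ t : ℝ, x = t • α} = Ψ ∩ ↑C') ∧
    (2 ≤ Module.finrank ℝ (Submodule.span ℝ S) →
      ∀ σ ∈ S, ∃ α, IsExtremeRoot S α ∧ LinearIndependent ℝ ![α, σ]) := by
  classical
  have hSΨ : S ⊆ Ψ := by rw [hS]; exact Set.inter_subset_left
  have hSC : S ⊆ ↑C := by rw [hS]; exact Set.inter_subset_right
  have hfin : S.Finite := hΨ.finite.subset hSΨ
  have h0 : ∀ x ∈ S, x ≠ 0 := fun x hx => hΨ.ne_zero x (hSΨ hx)
  have hpt : ∀ x ∈ Submodule.span {c : ℝ // 0 ≤ c} S,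
      -x ∈ Submodule.span {c : ℝ // 0 ≤ c} S → x = 0 := span_salient hC hSC
  obtain ⟨T, hTS0, hspanT, hminT⟩ := exists_minimal_gen hfin.toFinset
  rw [Set.Finite.coe_toFinset] at hspanT
  have hTS' : (↑T : Set V) ⊆ S := fun x hx => hfin.mem_toFinset.1 (hTS0 hx)
  have hptT : ∀ x ∈ Submodule.span {c : ℝ // 0 ≤ c} (↑T : Set V),
      -x ∈ Submodule.span {c : ℝ // 0 ≤ c} (↑T : Set V) → x = 0 := by
    rw [hspanT]; exact hpt
  have hgen : ∀ β ∈ T, ∀ x ∈ Submodule.span {c : ℝ // 0 ≤ c} S,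
      ∀ y ∈ Submodule.span {c : ℝ // 0 ≤ c} S, x + y = β →
      (∃ t : ℝ, 0 ≤ t ∧ x = t • β) ∧ (∃ t : ℝ, 0 ≤ t ∧ y = t • β) := by
    intro β hβ
    have h := minimal_is_extreme (S := (↑T : Set V)) hptT (by exact_mod_cast hβ)
      (h0 β (hTS' hβ)) (hminT β hβ)
    rwa [hspanT] at h
  have hTne : T.Nonempty := by
    rcases hne with ⟨σ₀, hσ₀⟩
    rcases Finset.eq_empty_or_nonempty T with rfl | h
    · exfalso
      have hmem : σ₀ ∈ Submodule.span {c : ℝ // 0 ≤ c} ((∅ : Finset V) : Set V) := by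
        rw [hspanT]; exact Submodule.subset_span hσ₀
      rw [Finset.coe_empty, Submodule.span_empty, Submodule.mem_bot] at hmem
      exact h0 σ₀ hσ₀ hmem
    · exact h
  refine ⟨?_, ?_, ?_⟩
  · -- Part 1
    obtain ⟨β, hβT⟩ := hTne
    obtain ⟨t₀, ht₀, hroot⟩ := extreme_root_of_gen hfin h0 (hTS' hβT) (hgen β hβT)
    exact ⟨_, hroot⟩
  · -- Part 2
    rintro α ⟨hαS, hhalf, hray⟩
    have hα0 : α ≠ 0 := h0 α hαS
    refine ⟨PointedCone.toConvexCone
      (Submodule.span {c : ℝ // 0 ≤ c} (S \ {x | ∃ t : ℝ, x = t • α})), ?_, ?_⟩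
    · intro x hx hnx
      exact hpt x (Submodule.span_mono Set.diff_subset hx)
        (Submodule.span_mono Set.diff_subset hnx)
    · ext x
      constructor
      · rintro ⟨hxS, hxray⟩
        exact ⟨hSΨ hxS, Submodule.subset_span ⟨hxS, hxray⟩⟩
      · rintro ⟨hxΨ, hxC'⟩
        have hxC'' : x ∈ Submodule.span {c : ℝ // 0 ≤ c} (S \ {x | ∃ t : ℝ, x = t • α}) := hxC'
        have hx0 : x ≠ 0 := hΨ.ne_zero x hxΨ
        have hxspanS : x ∈ Submodule.span {c : ℝ // 0 ≤ c} S :=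
          Submodule.span_mono Set.diff_subset hxC''
        have hxC : x ∈ C := (mem_C_of_mem_span hSC hxspanS).resolve_left hx0
        have hxS : x ∈ S := by rw [hS]; exact ⟨hxΨ, hxC⟩
        refine ⟨hxS, ?_⟩
        rintro ⟨t, rfl⟩
        have ht0 : t ≠ 0 := by
          rintro rfl
          exact hx0 (zero_smul ℝ α)
        have htpos : 0 < t := by
          rcases ht0.lt_or_gt with hneg | hpos
          · exfalso
            have hnc : -(t • α) ∈ C := by
              rw [← neg_smul]
              exact C.smul_mem (by linarith) (hSC hαS)
            exact hx0 (hC _ hxC hnc)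
          · exact hpos
        have hαmem : α ∈ Submodule.span {c : ℝ // 0 ≤ c} (S \ {x | ∃ t : ℝ, x = t • α}) := by
          have hmem := Submodule.smul_mem
            (Submodule.span {c : ℝ // 0 ≤ c} (S \ {x | ∃ t : ℝ, x = t • α}))
            (⟨t⁻¹, by positivity⟩ : {c : ℝ // 0 ≤ c}) hxC''
          have heq : (⟨t⁻¹, by positivity⟩ : {c : ℝ // 0 ≤ c}) • (t • α) = α := by
            rw [Nonneg.mk_smul, smul_smul, inv_mul_cancel₀ ht0, one_smul]
          rwa [heq] at hmem
        exact extreme_not_mem_span_diff hα0 hpt hray hαmem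
  · -- Part 3
    intro hdim σ hσ
    have hσ0 : σ ≠ 0 := h0 σ hσ
    have hexβ : ∃ β ∈ T, ∀ t : ℝ, β ≠ t • σ := by
      by_contra h
      push_neg at h
      have hle : Submodule.span ℝ S ≤ Submodule.span ℝ {σ} := by
        rw [Submodule.span_le]
        intro x hxS
        have hx : x ∈ Submodule.span {c : ℝ // 0 ≤ c} (↑T : Set V) := by
          rw [hspanT]; exact Submodule.subset_span hxS
        have hline : Submodule.span {c : ℝ // 0 ≤ c} (↑T : Set V) ≤ lineCone σ := by
          rw [Submodule.span_le]
          intro β hβ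
          obtain ⟨t, ht⟩ := h β (by exact_mod_cast hβ)
          exact ⟨t, ht⟩
        obtain ⟨t, ht⟩ := hline hx
        rw [ht]
        exact Submodule.smul_mem _ t (Submodule.subset_span rfl)
      have h1 : Module.finrank ℝ (Submodule.span ℝ S) ≤
          Module.finrank ℝ (Submodule.span ℝ ({σ} : Set V)) := Submodule.finrank_mono hle
      rw [finrank_span_singleton hσ0] at h1
      omega
    obtain ⟨β, hβT, hβσ⟩ := hexβ
    obtain ⟨t₀, ht₀, hroot⟩ := extreme_root_of_gen hfin h0 (hTS' hβT) (hgen β hβT)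
    refine ⟨t₀ • β, hroot, ?_⟩
    rw [linearIndependent_fin2]
    constructor
    · simpa using hσ0
    · intro a ha
      simp only [Matrix.cons_val_one, Matrix.head_cons, Matrix.cons_val_zero] at ha
      apply hβσ (t₀⁻¹ * a)
      rw [← smul_smul, ha, smul_smul, inv_mul_cancel₀ ht₀.ne', one_smul]
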